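/- For all integers d ≥ 1 and n ≥ 1, the integer n divides d_n := ∑_{m | n} μ(n/m)(d^m + 1), the sum ranging over positive divisors m of n, where μ is the Möbius function. -/

import Mathlib

open ArithmeticFunction Finset
open scoped ArithmeticFunction.Moebius

lemma fermat_int (p : ℕ) (hp : p.Prime) (c : ℤ) : (p : ℤ) ∣ c ^ p - c := by
  haveI : Fact p.Prime := ⟨hp⟩
  have : ((c ^ p - c : ℤ) : ZMod p) = 0 := by
    push_cast [ZMod.pow_card]
    ring
  exact (ZMod.intCast_zmod_eq_zero_iff_dvd _ _).mp this

lemma key_dvd (d p t : ℕ) (hp : p.Prime) (k : ℕ) (hk : 1 ≤ k) :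
    ((p : ℤ)) ^ k ∣ (d : ℤ) ^ (p ^ k * t) - (d : ℤ) ^ (p ^ (k - 1) * t) := by
  obtain ⟨k, rfl⟩ := Nat.exists_eq_add_of_le hk
  have h := dvd_sub_pow_of_dvd_sub (fermat_int p hp ((d : ℤ) ^ t)) k
  simp only [Nat.add_sub_cancel_left] at *
  have e1 : (d : ℤ) ^ (p ^ (1 + k) * t) = (((d : ℤ) ^ t) ^ p) ^ p ^ k := by
    rw [← pow_mul, ← pow_mul]; ring_nf
  have e2 : (d : ℤ) ^ (p ^ k * t) = ((d : ℤ) ^ t) ^ p ^ k := by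
    rw [← pow_mul]; ring_nf
  rw [e1, e2, add_comm 1 k]
  exact h

lemma main_dvd (d n p : ℕ) (hn : n ≠ 0) (hp : p.Prime) (hpn : p ∣ n) :
    ((p : ℤ)) ^ (n.factorization p) ∣
      ∑ e ∈ n.divisors, (μ e : ℤ) * (d : ℤ) ^ (n / e) := by
  set k := n.factorization p with hkdef
  have hk : 1 ≤ k := hp.factorization_pos_of_dvd hn hpn
  have hsplit := Finset.sum_filter_add_sum_filter_not n.divisors (fun e => p ∣ e)
      (fun e => (μ e : ℤ) * (d : ℤ) ^ (n / e))
  -- the sum over e with p ∣ e equals the sum over the pairs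
  have hB : ∑ e ∈ n.divisors.filter (fun e => p ∣ e), (μ e : ℤ) * (d : ℤ) ^ (n / e)
      = ∑ e ∈ n.divisors.filter (fun e => ¬ p ∣ e), -((μ e : ℤ) * (d : ℤ) ^ (n / (p * e))) := by
    rw [← Finset.sum_filter_of_ne (s := n.divisors.filter (fun e => p ∣ e))
        (p := fun e => ¬ p * p ∣ e) (f := fun e => (μ e : ℤ) * (d : ℤ) ^ (n / e)) ?_]
    · rw [Finset.filter_filter]
      refine Finset.sum_nbij' (fun e => e / p) (fun e => p * e) ?_ ?_ ?_ ?_ ?_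
      · intro e he
        simp only [Finset.mem_filter, Nat.mem_divisors] at he ⊢
        obtain ⟨⟨hed, h0⟩, hpe, hppe⟩ := he
        refine ⟨⟨(Nat.div_dvd_of_dvd hpe).trans hed, h0⟩, fun hc => hppe ?_⟩
        obtain ⟨c, hc⟩ := hc
        obtain ⟨b, rfl⟩ := hpe
        rw [Nat.mul_div_cancel_left _ hp.pos] at hc
        exact ⟨c, by rw [hc]; ring⟩
      · intro e he
        simp only [Finset.mem_filter, Nat.mem_divisors] at he ⊢
        obtain ⟨⟨hed, h0⟩, hpe⟩ := he
        refine ⟨⟨(Nat.Coprime.mul_dvd_of_dvd_of_dvd ?_ hpn hed), h0⟩,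
          Dvd.intro e rfl, fun hc => hpe ?_⟩
        · exact (Nat.Prime.coprime_iff_not_dvd hp).mpr hpe
        · exact (mul_dvd_mul_iff_left (a := p) hp.pos.ne').mp hc
      · intro e he
        simp only [Finset.mem_filter] at he
        exact Nat.mul_div_cancel' he.2.1
      · intro e he
        simp only [Finset.mem_filter] at he
        exact Nat.mul_div_cancel_left _ hp.pos
      · intro e he
        simp only [Finset.mem_filter, Nat.mem_divisors] at he
        obtain ⟨⟨hed, h0⟩, hpe, hppe⟩ := he
        obtain ⟨b, rfl⟩ := hpe
        rw [Nat.mul_div_cancel_left _ hp.pos]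
        have hpb : ¬ p ∣ b := fun hc => hppe (mul_dvd_mul_left p hc)
        have : μ (p * b) = μ p * μ b :=
          isMultiplicative_moebius.map_mul_of_coprime
            ((Nat.Prime.coprime_iff_not_dvd hp).mpr hpb)
        rw [this, moebius_apply_prime hp]
        push_cast
        ring
    · intro e he hne
      simp only [Finset.mem_filter] at he
      intro h
      apply hne
      have hnsq : ¬ Squarefree e := fun hsq =>
        hp.one_lt.ne' (Nat.isUnit_iff.mp (hsq p h))
      simp [moebius_eq_zero_of_not_squarefree hnsq]
  rw [← hsplit, hB, ← Finset.sum_add_distrib]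
  have hrw : ∀ e ∈ n.divisors.filter (fun e => ¬ p ∣ e),
      -((μ e : ℤ) * (d : ℤ) ^ (n / (p * e))) + (μ e : ℤ) * (d : ℤ) ^ (n / e)
        = (μ e : ℤ) * ((d : ℤ) ^ (n / e) - (d : ℤ) ^ (n / (p * e))) := by
    intro e _; ring
  rw [Finset.sum_congr rfl hrw]
  refine Finset.dvd_sum fun e he => ?_
  simp only [Finset.mem_filter, Nat.mem_divisors] at he
  obtain ⟨⟨hed, h0⟩, hpe⟩ := he
  have hcop : Nat.Coprime e (p ^ k) :=
    (Nat.Prime.coprime_iff_not_dvd hp).mpr hpe |>.symm.pow_right _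
  have hek : e * p ^ k ∣ n :=
    hcop.mul_dvd_of_dvd_of_dvd hed (Nat.ordProj_dvd n p)
  obtain ⟨t, ht⟩ := hek
  have he0 : e ≠ 0 := fun h => by simp [h] at hed; exact hn hed
  have h1 : n / e = p ^ k * t := by
    rw [ht, mul_assoc, Nat.mul_div_cancel_left _ (Nat.pos_of_ne_zero he0)]
  have h2 : n / (p * e) = p ^ (k - 1) * t := by
    have : n = (p * e) * (p ^ (k - 1) * t) := by
      rw [ht]
      have : p ^ k = p * p ^ (k - 1) := by
        rw [← pow_succ']
        congr 1
        omega
      rw [this]; ring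
    rw [this, Nat.mul_div_cancel_left _ (Nat.mul_pos hp.pos (Nat.pos_of_ne_zero he0))]
  rw [h1, h2]
  exact Dvd.dvd.mul_left (key_dvd d p t hp k hk) _

/-- For all integers `d ≥ 1` and `n ≥ 1`, `n` divides
`d_n := ∑_{m | n} μ(n/m)(d^m + 1)`. -/
theorem stmt15 (d n : ℕ) (hd : 1 ≤ d) (hn : 1 ≤ n) :
    (n : ℤ) ∣ ∑ m ∈ n.divisors, (μ (n / m) : ℤ) * ((d : ℤ) ^ m + 1) := by
  have hn0 : n ≠ 0 := by omega
  have hsplit : ∑ m ∈ n.divisors, (μ (n / m) : ℤ) * ((d : ℤ) ^ m + 1)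
      = (∑ m ∈ n.divisors, (μ (n / m) : ℤ) * (d : ℤ) ^ m)
        + ∑ m ∈ n.divisors, (μ (n / m) : ℤ) := by
    rw [← Finset.sum_add_distrib]
    exact Finset.sum_congr rfl fun m _ => by ring
  rw [hsplit]
  refine dvd_add ?_ ?_
  · -- first sum: reindex and use main_dvd
    have hT : ∑ m ∈ n.divisors, (μ (n / m) : ℤ) * (d : ℤ) ^ m
        = ∑ e ∈ n.divisors, (μ e : ℤ) * (d : ℤ) ^ (n / e) := by
      rw [← Nat.sum_div_divisors n (fun e => (μ e : ℤ) * (d : ℤ) ^ (n / e))]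
      refine Finset.sum_congr rfl fun m hm => ?_
      rw [Nat.div_div_self (Nat.mem_divisors.mp hm).1 hn0]
    rw [hT]
    set S := ∑ e ∈ n.divisors, (μ e : ℤ) * (d : ℤ) ^ (n / e) with hS
    rw [Int.natCast_dvd]
    rw [Nat.dvd_iff_prime_pow_dvd_dvd]
    intro p k hp hpk
    have hp' : p.Prime := hp
    rcases Nat.eq_zero_or_pos k with rfl | hk
    · simp
    · have hpn : p ∣ n := dvd_trans (dvd_pow_self p hk.ne') hpk
      have hle : k ≤ n.factorization p :=
        (Nat.Prime.pow_dvd_iff_le_factorization hp' hn0).mp hpk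
      have := main_dvd d n p hn0 hp' hpn
      have h2 : ((p ^ (n.factorization p) : ℕ) : ℤ) ∣ S := by push_cast; exact this
      rw [Int.natCast_dvd] at h2
      exact dvd_trans (pow_dvd_pow p hle) h2
  · -- second sum: ∑ μ(n/m) = if n = 1 then 1 else 0
    have hZ : ∑ m ∈ n.divisors, (μ (n / m) : ℤ) = ∑ e ∈ n.divisors, (μ e : ℤ) :=
      Nat.sum_div_divisors n (fun e => (μ e : ℤ))
    have hZ2 : ∑ e ∈ n.divisors, (μ e : ℤ) = (1 : ArithmeticFunction ℤ) n := by
      rw [← moebius_mul_coe_zeta, coe_mul_zeta_apply]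
    rw [hZ, hZ2]
    rcases eq_or_ne n 1 with rfl | h1
    · simp
    · rw [ArithmeticFunction.one_apply_ne h1]
      exact dvd_zero _
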